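/- Let n ≥ 1, let α > 0, let Q_min ≤ Q_max be real numbers with Δ = Q_max − Q_min, and let q ∈ ℝⁿ satisfy q_i ∈ [Q_min, Q_max] for all i. For a probability vector b ∈ ℝⁿ define the base-measure softmax Φ_b ∈ ℝⁿ by Φ_b(i) = b_i·exp(q_i/α) / ∑_{j=1}^n b_j·exp(q_j/α), whenever ∑_j b_j·exp(q_j/α) > 0. Then for all probability vectors b, b' ∈ ℝⁿ, ∑_{i=1}^n |Φ_b(i) − Φ_{b'}(i)| ≤ 2·exp(Δ/α)·∑_{i=1}^n |b_i − b'_i|. -/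

import Mathlib

/-- ℓ¹-Lipschitz continuity of the base-measure softmax in the
base measure: with `qᵢ ∈ [Q_min, Q_max]`, `Δ = Q_max − Q_min`, and
`Φ_b(i) = bᵢ·exp(qᵢ/α) / ∑ⱼ bⱼ·exp(qⱼ/α)`, for all probability vectors `b, b'`,
`∑ᵢ |Φ_b(i) − Φ_{b'}(i)| ≤ 2·exp(Δ/α)·∑ᵢ |bᵢ − b'ᵢ|`. -/
theorem softmax_lipschitz_in_base_measure
    (n : ℕ) (hn : 1 ≤ n)
    (α : ℝ) (hα : 0 < α)
    (Qmin Qmax : ℝ) (hQ : Qmin ≤ Qmax) (Δ : ℝ) (hΔ : Δ = Qmax - Qmin)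
    (q : Fin n → ℝ) (hq : ∀ i, q i ∈ Set.Icc Qmin Qmax)
    (Φ : (Fin n → ℝ) → Fin n → ℝ)
    (hΦ : ∀ b i, Φ b i =
      b i * Real.exp (q i / α) / ∑ j, b j * Real.exp (q j / α)) :
    ∀ b b' : Fin n → ℝ,
      (∀ i, 0 ≤ b i) → (∑ i, b i = 1) →
      (∀ i, 0 ≤ b' i) → (∑ i, b' i = 1) →
      ∑ i, |Φ b i - Φ b' i| ≤ 2 * Real.exp (Δ / α) * ∑ i, |b i - b' i| := by
  intro b b' hb hbs hb' hb's
  set w : Fin n → ℝ := fun i => Real.exp (q i / α) with hw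
  have hwpos : ∀ i, 0 < w i := fun i => Real.exp_pos _
  set E := Real.exp (Qmin / α) with hE
  set M := Real.exp (Qmax / α) with hM
  have hEpos : 0 < E := Real.exp_pos _
  have hMpos : 0 < M := Real.exp_pos _
  have hwl : ∀ i, E ≤ w i := fun i =>
    Real.exp_le_exp.2 ((div_le_div_iff_of_pos_right hα).2 (hq i).1)
  have hwu : ∀ i, w i ≤ M := fun i =>
    Real.exp_le_exp.2 ((div_le_div_iff_of_pos_right hα).2 (hq i).2)
  have hME : M / E = Real.exp (Δ / α) := by
    rw [hM, hE, ← Real.exp_sub, hΔ, sub_div]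
  set S := ∑ j, b j * w j with hSdef
  set S' := ∑ j, b' j * w j with hS'def
  have hS : E ≤ S := by
    calc E = ∑ i, b i * E := by rw [← Finset.sum_mul, hbs, one_mul]
    _ ≤ S := Finset.sum_le_sum fun i _ => mul_le_mul_of_nonneg_left (hwl i) (hb i)
  have hS' : E ≤ S' := by
    calc E = ∑ i, b' i * E := by rw [← Finset.sum_mul, hb's, one_mul]
    _ ≤ S' := Finset.sum_le_sum fun i _ => mul_le_mul_of_nonneg_left (hwl i) (hb' i)
  have hSpos : 0 < S := lt_of_lt_of_le hEpos hS
  have hS'pos : 0 < S' := lt_of_lt_of_le hEpos hS'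
  set T := ∑ i, |b i - b' i| with hT
  have hTnonneg : 0 ≤ T := Finset.sum_nonneg fun i _ => abs_nonneg _
  -- pointwise bound
  have hpt : ∀ i, |Φ b i - Φ b' i| ≤
      w i * |b i - b' i| / S + b' i * w i * |S' - S| / (S * S') := by
    intro i
    have hid : Φ b i - Φ b' i =
        (b i - b' i) * w i / S + b' i * w i * (S' - S) / (S * S') := by
      rw [hΦ, hΦ]
      show b i * w i / S - b' i * w i / S' = _
      field_simp
      ring
    rw [hid]
    refine (abs_add_le _ _).trans ?_
    have h1 : |(b i - b' i) * w i / S| = w i * |b i - b' i| / S := by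
      rw [abs_div, abs_mul, abs_of_pos (hwpos i), abs_of_pos hSpos, mul_comm]
    have h2 : |b' i * w i * (S' - S) / (S * S')| = b' i * w i * |S' - S| / (S * S') := by
      rw [abs_div, abs_mul, abs_mul, abs_of_nonneg (hb' i), abs_of_pos (hwpos i),
        abs_of_pos (mul_pos hSpos hS'pos)]
    rw [h1, h2]
  have hSS : |S' - S| ≤ M * T := by
    have : S' - S = ∑ i, (b' i - b i) * w i := by
      rw [hSdef, hS'def, ← Finset.sum_sub_distrib]
      congr 1; ext i; ring
    rw [this]
    refine (Finset.abs_sum_le_sum_abs _ _).trans ?_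
    rw [hT, Finset.mul_sum]
    refine Finset.sum_le_sum fun i _ => ?_
    rw [abs_mul, abs_of_pos (hwpos i), abs_sub_comm]
    calc |b i - b' i| * w i ≤ |b i - b' i| * M :=
          mul_le_mul_of_nonneg_left (hwu i) (abs_nonneg _)
    _ = M * |b i - b' i| := mul_comm _ _
  calc ∑ i, |Φ b i - Φ b' i|
      ≤ ∑ i, (w i * |b i - b' i| / S + b' i * w i * |S' - S| / (S * S')) :=
        Finset.sum_le_sum fun i _ => hpt i
    _ = (∑ i, w i * |b i - b' i| / S) + (∑ i, b' i * w i) * |S' - S| / (S * S') := by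
        rw [Finset.sum_add_distrib]; congr 1; rw [← Finset.sum_div, ← Finset.sum_mul]
    _ = (∑ i, w i * |b i - b' i| / S) + |S' - S| / S := by
        rw [← hS'def]
        congr 1
        field_simp
    _ ≤ Real.exp (Δ / α) * T + Real.exp (Δ / α) * T := by
        gcongr
        · rw [← hME, hT, Finset.mul_sum]
          refine Finset.sum_le_sum fun i _ => ?_
          rw [div_mul_eq_mul_div]
          exact div_le_div₀ (by positivity)
            (mul_le_mul_of_nonneg_right (hwu i) (abs_nonneg _)) hEpos hS
        · calc |S' - S| / S ≤ M * T / E := div_le_div₀ (by positivity) hSS hEpos hS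
          _ = Real.exp (Δ / α) * T := by rw [← hME]; field_simp
    _ = 2 * Real.exp (Δ / α) * T := by ring
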